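/- In a finite probabilistic game structure, fix n ∈ ℕ and suppose that for all states s, t ∈ S, s ≼^L_n t implies that the point distribution of t satisfies the n-characteristic formula φ^n_s. Then for all distributions Δ, Θ ∈ Dist(S): if Δ (≼̄^L_n) Θ (the lifting of ≼^L_n to distributions), then Θ satisfies the n-characteristic formula φ^n_Δ. -/

import Mathlib

open Finset

structure ProbDist (S : Type) [Fintype S] where
  f : S → ℝ
  nonneg : ∀ s, 0 ≤ f s
  sum_one : ∑ s, f s = 1

def Lift {S S' : Type} [Fintype S] [Fintype S'] (R : S → S' → Prop)
    (Δ : ProbDist S) (Θ : ProbDist S') : Prop :=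
  ∃ w : S → S' → ℝ,
    (∀ s t, 0 ≤ w s t) ∧
    (∀ s, ∑ t, w s t = Δ.f s) ∧
    (∀ t, ∑ s, w s t = Θ.f t) ∧
    (∀ s t, 0 < w s t → R s t)

def ProbDist.point {S : Type} [Fintype S] [DecidableEq S] (s : S) : ProbDist S where
  f t := if t = s then 1 else 0
  nonneg t := by positivity
  sum_one := by simp

/-- A probabilistic game structure with state space `S`, atomic propositions `P`,
    and action sets `A1` (player I) and `A2` (player II). -/
structure PGS (S P A1 A2 : Type) [Fintype S] [Fintype A1] [Fintype A2] where
  s0 : S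
  label : S → Set P
  δ : S → A1 × A2 → ProbDist S

variable {S P A1 A2 : Type} [Fintype S] [Fintype A1] [Fintype A2]

/-- A mixed action of player I. -/
abbrev MixedI (S A1 : Type) [Fintype A1] := S → ProbDist A1

/-- A mixed action of player II. -/
abbrev MixedII (S A2 : Type) [Fintype A2] := S → ProbDist A2

/-- The extended transition function `δ̂(s, ⟨π₁, π₂⟩)` on a state. -/
def PGS.stepState (G : PGS S P A1 A2) (s : S) (π1 : MixedI S A1) (π2 : MixedII S A2) :
    ProbDist S where
  f t := ∑ a1, ∑ a2, (π1 s).f a1 * (π2 s).f a2 * (G.δ s (a1, a2)).f t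
  nonneg t := by
    refine Finset.sum_nonneg fun a1 _ => Finset.sum_nonneg fun a2 _ => ?_
    have h1 := (π1 s).nonneg a1
    have h2 := (π2 s).nonneg a2
    have h3 := (G.δ s (a1, a2)).nonneg t
    positivity
  sum_one := by
    rw [Finset.sum_comm]
    have h : ∀ a1 : A1, ∑ t, ∑ a2, (π1 s).f a1 * (π2 s).f a2 * (G.δ s (a1, a2)).f t
        = (π1 s).f a1 := by
      intro a1
      rw [Finset.sum_comm]
      have h2 : ∀ a2 : A2, ∑ t, (π1 s).f a1 * (π2 s).f a2 * (G.δ s (a1, a2)).f t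
          = (π1 s).f a1 * (π2 s).f a2 := by
        intro a2
        rw [← Finset.mul_sum, (G.δ s (a1, a2)).sum_one, mul_one]
      rw [Finset.sum_congr rfl fun a2 _ => h2 a2, ← Finset.mul_sum, (π2 s).sum_one, mul_one]
    rw [Finset.sum_congr rfl fun a1 _ => h a1, (π1 s).sum_one]

/-- The extended transition function `δ̂(Δ, ⟨π₁, π₂⟩)` on a distribution. -/
def PGS.stepDist (G : PGS S P A1 A2) (Δ : ProbDist S) (π1 : MixedI S A1) (π2 : MixedII S A2) :
    ProbDist S where
  f s' := ∑ t, Δ.f t * (G.stepState t π1 π2).f s'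
  nonneg s' := Finset.sum_nonneg fun t _ =>
    mul_nonneg (Δ.nonneg t) ((G.stepState t π1 π2).nonneg s')
  sum_one := by
    rw [Finset.sum_comm]
    have h : ∀ t : S, ∑ s', Δ.f t * (G.stepState t π1 π2).f s' = Δ.f t := by
      intro t
      rw [← Finset.mul_sum, (G.stepState t π1 π2).sum_one, mul_one]
    rw [Finset.sum_congr rfl fun t _ => h t, Δ.sum_one]

/-- The set of distributions reachable from `s` when player I plays `π`:
    `δ̂(s, π) = {δ̂(s, ⟨π, π'⟩) | π' ∈ Π_II}`. -/
def PGS.stepSet (G : PGS S P A1 A2) (s : S) (π : MixedI S A1) : Set (ProbDist S) :=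
  {Δ | ∃ π' : MixedII S A2, Δ = G.stepState s π π'}

/-- The Smyth order on sets of distributions with respect to the lifting of `R`:
    `P (R̄)_Sm Q` iff every element of `Q` is above (w.r.t. `R̄`) some element of `P`. -/
def SmythLift {S : Type} [Fintype S] (R : S → S → Prop) (Ps Qs : Set (ProbDist S)) : Prop :=
  ∀ Θ ∈ Qs, ∃ Δ ∈ Ps, Lift R Δ Θ

/-- `R` is a probabilistic alternating simulation (PA-simulation) on `G`. -/
def IsPASim (G : PGS S P A1 A2) (R : S → S → Prop) : Prop :=
  ∀ s t, R s t →
    G.label s = G.label t ∧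
    ∀ π1 : MixedI S A1, ∃ π2 : MixedI S A1,
      SmythLift R (G.stepSet s π1) (G.stepSet t π2)

/-- The syntax of the modal logic `L⊕`. -/
inductive LFormula (P : Type) : Type 1 where
  | atom : P → LFormula P
  | natom : P → LFormula P
  | conj : (I : Type) → (I → LFormula P) → LFormula P
  | disj : (I : Type) → (I → LFormula P) → LFormula P
  | enf : LFormula P → LFormula P
  | psum : (n : ℕ) → (Fin n → ℝ) → (Fin n → LFormula P) → LFormula P
  | nsum : (n : ℕ) → (Fin n → LFormula P) → LFormula P

/-- The distribution semantics of `L⊕`: `Sat G φ Δ` means `Δ ∈ ⟦φ⟧`. -/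
def Sat (G : PGS S P A1 A2) : LFormula P → ProbDist S → Prop
  | .atom p, Δ => ∀ s, 0 < Δ.f s → p ∈ G.label s
  | .natom p, Δ => ∀ s, 0 < Δ.f s → p ∉ G.label s
  | .conj _ f, Δ => ∀ i, Sat G (f i) Δ
  | .disj _ f, Δ => ∃ i, Sat G (f i) Δ
  | .enf φ, Δ => ∃ π1 : MixedI S A1, ∀ π2 : MixedII S A2, Sat G φ (G.stepDist Δ π1 π2)
  | .psum n p f, Δ => ∃ D : Fin n → ProbDist S,
      (∀ s, Δ.f s = ∑ j, p j * (D j).f s) ∧ ∀ j, Sat G (f j) (D j)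
  | .nsum n f, Δ => ∃ p : Fin n → ℝ, (∀ j, 0 ≤ p j) ∧ (∑ j, p j = 1) ∧
      ∃ D : Fin n → ProbDist S,
        (∀ s, Δ.f s = ∑ j, p j * (D j).f s) ∧ ∀ j, Sat G (f j) (D j)

/-- The approximating simulations `≼_n`. -/
def SimN (G : PGS S P A1 A2) : ℕ → S → S → Prop
  | 0 => fun s t => G.label s = G.label t
  | n + 1 => fun s t => SimN G n s t ∧
      ∀ π1 : MixedI S A1, ∃ π2 : MixedI S A1,
        SmythLift (SimN G n) (G.stepSet s π1) (G.stepSet t π2)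

/-- Formulas of `L⊕₀`: built from literals `p`, `¬p` and conjunctions only. -/
inductive IsLevel0 {P : Type} : LFormula P → Prop where
  | atom (p : P) : IsLevel0 (.atom p)
  | natom (p : P) : IsLevel0 (.natom p)
  | conj (I : Type) (f : I → LFormula P) (h : ∀ i, IsLevel0 (f i)) : IsLevel0 (.conj I f)

/-- The level-`n` fragments `L⊕_n` of the logic `L⊕`:
    `L⊕₀` is built from literals and conjunctions; `φ ∈ L⊕_{n+1}` if `φ ∈ L⊕_n` or `φ` is
    a conjunction of formulas of the form `⟪I⟫ ⊕_i Σ_j p_j φ_{i,j}` with each `φ_{i,j} ∈ L⊕_n`. -/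
def InLevel {P : Type} : ℕ → LFormula P → Prop
  | 0, φ => IsLevel0 φ
  | n + 1, φ => InLevel n φ ∨
      ∃ (I : Type) (f : I → LFormula P), φ = .conj I f ∧
        ∀ i, ∃ (m : ℕ) (ks : Fin m → ℕ) (ps : (k : Fin m) → Fin (ks k) → ℝ)
            (gs : (k : Fin m) → Fin (ks k) → LFormula P),
            f i = .enf (.nsum m (fun k => .psum (ks k) (ps k) (gs k))) ∧
            ∀ k j, InLevel n (gs k j)

/-- `s ≼^L_n t`: every `L⊕`-formula of level at most `n` satisfied by the point
    distribution of `s` is satisfied by the point distribution of `t`. -/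
def SimLn (G : PGS S P A1 A2) [DecidableEq S] (n : ℕ) (s t : S) : Prop :=
  ∀ φ : LFormula P, InLevel n φ →
    Sat G φ (ProbDist.point s) → Sat G φ (ProbDist.point t)

/-- The support of a distribution, as a finset. -/
noncomputable def ProbDist.support {S : Type} [Fintype S] (Δ : ProbDist S) : Finset S :=
  Finset.univ.filter (fun s => 0 < Δ.f s)

/-- The characteristic formula `φ^n_Δ = ⊕_{t ∈ supp Δ} Δ(t)·c(t)` of a distribution,
    given the characteristic formulas `c` of states. -/
noncomputable def charDist (c : S → LFormula P) (Δ : ProbDist S) : LFormula P :=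
  .psum Δ.support.card
    (fun i => Δ.f ((Δ.support.equivFin.symm i) : S))
    (fun i => c ((Δ.support.equivFin.symm i) : S))

open Classical in
/-- The `0`-characteristic formula
    `φ⁰_s = ⋀{p | p ∈ L(s)} ∧ ⋀{¬q | q ∈ Prop ∖ L(s)}` of a state. -/
noncomputable def char0 (G : PGS S P A1 A2) (s : S) : LFormula P :=
  .conj P (fun p => if p ∈ G.label s then .atom p else .natom p)

/-- The `n`-characteristic formulas `φ^n_s` of states:
    `φ^{n+1}_s = ⋀_{π ∈ Dist(Act_I)} ⟪I⟫ ⊕_{b ∈ Act_II} φ^n_{δ̂(s,⟨π,b̄⟩)}`. -/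
noncomputable def charState (G : PGS S P A1 A2) [DecidableEq A2] : ℕ → S → LFormula P
  | 0, s => char0 G s
  | n + 1, s => .conj (ProbDist A1) (fun π => .enf (.nsum (Fintype.card A2) (fun b =>
      charDist (charState G n)
        (G.stepState s (fun _ => π)
          (fun _ => ProbDist.point ((Fintype.equivFin A2).symm b))))))

/-- The syntax of the probabilistic alternating-time mu-calculus PAMu,
    with variables drawn from `ℕ`. -/
inductive MuFormula (P : Type) : Type 1 where
  | atom : P → MuFormula P
  | natom : P → MuFormula P
  | conj : (I : Type) → (I → MuFormula P) → MuFormula P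
  | disj : (I : Type) → (I → MuFormula P) → MuFormula P
  | enf : MuFormula P → MuFormula P
  | psum : (n : ℕ) → (Fin n → ℝ) → (Fin n → MuFormula P) → MuFormula P
  | nsum : (n : ℕ) → (Fin n → MuFormula P) → MuFormula P
  | var : ℕ → MuFormula P
  | mu : ℕ → MuFormula P → MuFormula P
  | nu : ℕ → MuFormula P → MuFormula P

/-- The semantics `⟦φ⟧ρ ⊆ Dist(S)` of PAMu formulas, relative to an
    environment `ρ` mapping variables to sets of distributions. -/
def MuSem (G : PGS S P A1 A2) : MuFormula P → (ℕ → Set (ProbDist S)) → Set (ProbDist S)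
  | .atom p, _ => {Δ | ∀ s, 0 < Δ.f s → p ∈ G.label s}
  | .natom p, _ => {Δ | ∀ s, 0 < Δ.f s → p ∉ G.label s}
  | .conj _ f, ρ => ⋂ i, MuSem G (f i) ρ
  | .disj _ f, ρ => ⋃ i, MuSem G (f i) ρ
  | .enf φ, ρ => {Δ | ∃ π1 : MixedI S A1, ∀ π2 : MixedII S A2,
      G.stepDist Δ π1 π2 ∈ MuSem G φ ρ}
  | .psum n p f, ρ => {Δ | ∃ D : Fin n → ProbDist S,
      (∀ s, Δ.f s = ∑ j, p j * (D j).f s) ∧ ∀ j, D j ∈ MuSem G (f j) ρ}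
  | .nsum n f, ρ => {Δ | ∃ p : Fin n → ℝ, (∀ j, 0 ≤ p j) ∧ (∑ j, p j = 1) ∧
      ∃ D : Fin n → ProbDist S,
        (∀ s, Δ.f s = ∑ j, p j * (D j).f s) ∧ ∀ j, D j ∈ MuSem G (f j) ρ}
  | .var v, ρ => ρ v
  | .mu v φ, ρ => ⋂₀ {D | MuSem G φ (Function.update ρ v D) ⊆ D}
  | .nu v φ, ρ => ⋃₀ {D | D ⊆ MuSem G φ (Function.update ρ v D)}

/-- The free variables of a PAMu formula. -/
def MuFormula.FV {P : Type} : MuFormula P → Set ℕ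
  | .atom _ => ∅
  | .natom _ => ∅
  | .conj _ f => ⋃ i, (f i).FV
  | .disj _ f => ⋃ i, (f i).FV
  | .enf φ => φ.FV
  | .psum _ _ f => ⋃ j, (f j).FV
  | .nsum _ f => ⋃ j, (f j).FV
  | .var v => {v}
  | .mu v φ => φ.FV \ {v}
  | .nu v φ => φ.FV \ {v}

/-- Substitution `φ[Z ↦ ψ]` of `ψ` for the free occurrences of variable `v` in `φ`. -/
def MuFormula.subst {P : Type} (v : ℕ) (ψ : MuFormula P) : MuFormula P → MuFormula P
  | .atom p => .atom p
  | .natom p => .natom p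
  | .conj I f => .conj I (fun i => MuFormula.subst v ψ (f i))
  | .disj I f => .disj I (fun i => MuFormula.subst v ψ (f i))
  | .enf φ => .enf (MuFormula.subst v ψ φ)
  | .psum n p f => .psum n p (fun j => MuFormula.subst v ψ (f j))
  | .nsum n f => .nsum n (fun j => MuFormula.subst v ψ (f j))
  | .var w => if w = v then ψ else .var w
  | .mu w φ => if w = v then .mu w φ else .mu w (MuFormula.subst v ψ φ)
  | .nu w φ => if w = v then .nu w φ else .nu w (MuFormula.subst v ψ φ)

/-- `⊥`: the empty disjunction, false everywhere. -/
def MuFormula.bot (P : Type) : MuFormula P := .disj Empty (fun e => e.elim)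

/-- `⊤`: the empty conjunction, true everywhere. -/
def MuFormula.top (P : Type) : MuFormula P := .conj Empty (fun e => e.elim)

/-- The approximants `μ^i Z.φ` of a least-fixpoint formula:
    `μ⁰Z.φ = ⊥` and `μ^{i+1}Z.φ = φ[Z ↦ μ^i Z.φ]`. -/
def muApprox {P : Type} (v : ℕ) (φ : MuFormula P) : ℕ → MuFormula P
  | 0 => MuFormula.bot P
  | i + 1 => MuFormula.subst v (muApprox v φ i) φ

/-- The approximants `ν^i Z.φ` of a greatest-fixpoint formula:
    `ν⁰Z.φ = ⊤` and `ν^{i+1}Z.φ = φ[Z ↦ ν^i Z.φ]`. -/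
def nuApprox {P : Type} (v : ℕ) (φ : MuFormula P) : ℕ → MuFormula P
  | 0 => MuFormula.top P
  | i + 1 => MuFormula.subst v (nuApprox v φ i) φ

/-! ### Auxiliary development for the proof -/

/-- Disjunction-free formulas of `L⊕`. -/
inductive NoDisj {P : Type} : LFormula P → Prop
  | atom (p : P) : NoDisj (.atom p)
  | natom (p : P) : NoDisj (.natom p)
  | conj (I : Type) (f : I → LFormula P) (h : ∀ i, NoDisj (f i)) : NoDisj (.conj I f)
  | enf (φ : LFormula P) (h : NoDisj φ) : NoDisj (.enf φ)
  | psum (n : ℕ) (p : Fin n → ℝ) (f : Fin n → LFormula P) (h : ∀ j, NoDisj (f j)) :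
      NoDisj (.psum n p f)
  | nsum (n : ℕ) (f : Fin n → LFormula P) (h : ∀ j, NoDisj (f j)) : NoDisj (.nsum n f)

/-- A normalized mixture of distributions with nonnegative weights of positive total mass. -/
noncomputable def normMix {S ι : Type} [Fintype S] [Fintype ι] (c : ι → ℝ)
    (h0 : ∀ k, 0 ≤ c k) (D : ι → ProbDist S) (hpos : 0 < ∑ k, c k) : ProbDist S where
  f s := (∑ k, c k * (D k).f s) / (∑ k, c k)
  nonneg s := div_nonneg (Finset.sum_nonneg fun k _ =>
    mul_nonneg (h0 k) ((D k).nonneg s)) hpos.le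
  sum_one := by
    rw [← Finset.sum_div, Finset.sum_comm]
    have : ∀ k : ι, ∑ s, c k * (D k).f s = c k := fun k => by
      rw [← Finset.mul_sum, (D k).sum_one, mul_one]
    rw [Finset.sum_congr rfl fun k _ => this k, div_self hpos.ne']

lemma exists_pos_of_sum_one {ι : Type} [Fintype ι] {lam : ι → ℝ}
    (h0 : ∀ k, 0 ≤ lam k) (h1 : ∑ k, lam k = 1) : ∃ k, 0 < lam k := by
  by_contra hc
  push_neg at hc
  have : ∑ k, lam k = 0 := Finset.sum_eq_zero fun k _ => le_antisymm (hc k) (h0 k)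
  rw [h1] at this; norm_num at this

lemma charState_noDisj {S P A1 A2 : Type} [Fintype S] [Fintype A1] [Fintype A2]
    [DecidableEq A2] (G : PGS S P A1 A2) : ∀ n s, NoDisj (charState G n s) := by
  intro n
  induction n with
  | zero =>
    intro s
    refine NoDisj.conj _ _ fun p => ?_
    by_cases hp : p ∈ G.label s <;> simp [char0, charState, hp] <;>
      first | exact NoDisj.atom p | exact NoDisj.natom p
  | succ n ih =>
    intro s
    refine NoDisj.conj _ _ fun π => NoDisj.enf _ (NoDisj.nsum _ _ fun b => ?_)
    exact NoDisj.psum _ _ _ fun i => ih _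

/-- Convexity of the semantics of disjunction-free formulas: any (pointwise) convex
combination of satisfying distributions satisfies the formula, where satisfaction is
only needed for components with positive weight. -/
theorem sat_mix {S P A1 A2 : Type} [Fintype S] [Fintype A1] [Fintype A2]
    (G : PGS S P A1 A2) :
    ∀ φ : LFormula P, NoDisj φ →
    ∀ (ι : Type) [Fintype ι] (lam : ι → ℝ), (∀ k, 0 ≤ lam k) → (∑ k, lam k) = 1 →
    ∀ D : ι → ProbDist S, (∀ k, 0 < lam k → Sat G φ (D k)) →
    ∀ Θ : ProbDist S, (∀ s, Θ.f s = ∑ k, lam k * (D k).f s) → Sat G φ Θ := by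
  intro φ
  induction φ with
  | atom p =>
    intro _ ι _ lam h0 h1 D hsat Θ hΘ s hs
    rw [hΘ s] at hs
    have hne : ¬ ∀ k ∈ Finset.univ, lam k * (D k).f s = 0 := fun hall => by
      rw [Finset.sum_eq_zero hall] at hs; exact lt_irrefl 0 hs
    push_neg at hne
    obtain ⟨k, -, hk⟩ := hne
    obtain ⟨hk1, hk2⟩ := mul_ne_zero_iff.mp hk
    exact hsat k (lt_of_le_of_ne (h0 k) (Ne.symm hk1)) s
      (lt_of_le_of_ne ((D k).nonneg s) (Ne.symm hk2))
  | natom p =>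
    intro _ ι _ lam h0 h1 D hsat Θ hΘ s hs
    rw [hΘ s] at hs
    have hne : ¬ ∀ k ∈ Finset.univ, lam k * (D k).f s = 0 := fun hall => by
      rw [Finset.sum_eq_zero hall] at hs; exact lt_irrefl 0 hs
    push_neg at hne
    obtain ⟨k, -, hk⟩ := hne
    obtain ⟨hk1, hk2⟩ := mul_ne_zero_iff.mp hk
    exact hsat k (lt_of_le_of_ne (h0 k) (Ne.symm hk1)) s
      (lt_of_le_of_ne ((D k).nonneg s) (Ne.symm hk2))
  | conj I f ih =>
    intro hnd ι _ lam h0 h1 D hsat Θ hΘ i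
    cases hnd with
    | conj _ _ hf => exact ih i (hf i) ι lam h0 h1 D (fun k hk => hsat k hk i) Θ hΘ
  | disj I f ih => intro hnd; cases hnd
  | enf φ ih =>
    intro hnd ι _ lam h0 h1 D hsat Θ hΘ
    classical
    cases hnd with
    | enf _ hφ =>
      obtain ⟨k0, hk0⟩ := exists_pos_of_sum_one h0 h1
      have hsat' : ∀ k, 0 < lam k → ∃ π1 : MixedI S A1,
          ∀ π2 : MixedII S A2, Sat G φ (G.stepDist (D k) π1 π2) := hsat
      choose Pc1 hPc1 using hsat'
      set Pc : ι → MixedI S A1 := fun k =>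
        if h : 0 < lam k then Pc1 k h else Pc1 k0 hk0 with hPcdef
      have hPcprop : ∀ k, 0 < lam k → ∀ π2, Sat G φ (G.stepDist (D k) (Pc k) π2) := by
        intro k h π2
        simp only [hPcdef, dif_pos h]
        exact hPc1 k h π2
      have hmass : ∀ t : S, 0 < Θ.f t → 0 < ∑ k, lam k * (D k).f t := fun t ht => by
        rw [← hΘ t]; exact ht
      set π1 : MixedI S A1 := fun t =>
        if h : 0 < Θ.f t then
          normMix (fun k => lam k * (D k).f t)
            (fun k => mul_nonneg (h0 k) ((D k).nonneg t)) (fun k => Pc k t) (hmass t h)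
        else Pc k0 t with hπ1def
      have key : ∀ (π2 : MixedII S A2) (s' : S),
          (G.stepDist Θ π1 π2).f s' = ∑ k, lam k * ((G.stepDist (D k) (Pc k) π2).f s') := by
        intro π2 s'
        have lhs_eq : (G.stepDist Θ π1 π2).f s'
            = ∑ t, Θ.f t * (G.stepState t π1 π2).f s' := rfl
        have rhs_eq : ∀ k, (G.stepDist (D k) (Pc k) π2).f s'
            = ∑ t, (D k).f t * (G.stepState t (Pc k) π2).f s' := fun k => rfl
        rw [lhs_eq]
        simp only [rhs_eq, Finset.mul_sum]
        rw [Finset.sum_comm]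
        refine Finset.sum_congr rfl fun t _ => ?_
        by_cases h : 0 < Θ.f t
        · -- positive mass at t
          have hC : ∑ k, lam k * (D k).f t = Θ.f t := (hΘ t).symm
          have hne : Θ.f t ≠ 0 := ne_of_gt h
          have hπt : ∀ a1 : A1, (π1 t).f a1
              = (∑ k, lam k * (D k).f t * (Pc k t).f a1) / Θ.f t := by
            intro a1
            simp only [hπ1def, dif_pos h, normMix]
            rw [hC]
          have sstep : ∀ π : MixedI S A1, (G.stepState t π π2).f s'
              = ∑ a1, ∑ a2, (π t).f a1 * (π2 t).f a2 * (G.δ t (a1, a2)).f s' :=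
            fun π => rfl
          simp only [sstep]
          calc Θ.f t * ∑ a1, ∑ a2, (π1 t).f a1 * (π2 t).f a2 * (G.δ t (a1, a2)).f s'
              = ∑ a1, ∑ a2, ∑ k, (lam k * (D k).f t * (Pc k t).f a1)
                  * ((π2 t).f a2 * (G.δ t (a1, a2)).f s') := by
                rw [Finset.mul_sum]
                refine Finset.sum_congr rfl fun a1 _ => ?_
                rw [Finset.mul_sum]
                refine Finset.sum_congr rfl fun a2 _ => ?_
                rw [hπt a1, Finset.sum_div, Finset.sum_mul, Finset.sum_mul,
                  Finset.mul_sum]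
                refine Finset.sum_congr rfl fun k _ => ?_
                field_simp
            _ = ∑ a1, ∑ k, ∑ a2, (lam k * (D k).f t * (Pc k t).f a1)
                  * ((π2 t).f a2 * (G.δ t (a1, a2)).f s') :=
                Finset.sum_congr rfl fun a1 _ => Finset.sum_comm
            _ = ∑ k, ∑ a1, ∑ a2, (lam k * (D k).f t * (Pc k t).f a1)
                  * ((π2 t).f a2 * (G.δ t (a1, a2)).f s') := Finset.sum_comm
            _ = ∑ k, lam k * ((D k).f t
                  * ∑ a1, ∑ a2, (Pc k t).f a1 * (π2 t).f a2 * (G.δ t (a1, a2)).f s') := by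
                refine Finset.sum_congr rfl fun k _ => ?_
                simp only [Finset.mul_sum]
                refine Finset.sum_congr rfl fun a1 _ =>
                  Finset.sum_congr rfl fun a2 _ => ?_
                ring
        · -- zero mass at t
          have hΘ0 : Θ.f t = 0 := le_antisymm (not_lt.1 h) (Θ.nonneg t)
          have hsum0 : ∑ k, lam k * (D k).f t = 0 := by rw [← hΘ t]; exact hΘ0
          have hz : ∀ k, lam k * (D k).f t = 0 := fun k =>
            (Finset.sum_eq_zero_iff_of_nonneg
              (fun k _ => mul_nonneg (h0 k) ((D k).nonneg t))).1 hsum0 k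
              (Finset.mem_univ k)
          rw [hΘ0, zero_mul]
          symm
          refine Finset.sum_eq_zero fun k _ => ?_
          rw [← mul_assoc, hz k, zero_mul]
      exact ⟨π1, fun π2 => ih hφ ι lam h0 h1
        (fun k => G.stepDist (D k) (Pc k) π2) (fun k hk => hPcprop k hk π2)
        (G.stepDist Θ π1 π2) (fun s' => key π2 s')⟩
  | psum m pr f ih =>
    intro hnd ι _ lam h0 h1 D hsat Θ hΘ
    classical
    cases hnd with
    | psum _ _ _ hf =>
      have hsat' : ∀ k, 0 < lam k → ∃ E : Fin m → ProbDist S,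
          (∀ s, (D k).f s = ∑ j, pr j * (E j).f s) ∧ ∀ j, Sat G (f j) (E j) := hsat
      choose E hE1 hE2 using hsat'
      set E' : ι → Fin m → ProbDist S := fun k =>
        if h : 0 < lam k then E k h else fun _ => D k with hE'def
      have hE'1 : ∀ k, 0 < lam k → ∀ s, (D k).f s = ∑ j, pr j * (E' k j).f s := by
        intro k hk s; simp only [hE'def, dif_pos hk]; exact hE1 k hk s
      have hE'2 : ∀ k, 0 < lam k → ∀ j, Sat G (f j) (E' k j) := by
        intro k hk j; simp only [hE'def, dif_pos hk]; exact hE2 k hk j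
      have hpos1 : (0:ℝ) < ∑ k, lam k := by rw [h1]; norm_num
      set F : Fin m → ProbDist S := fun j =>
        normMix lam h0 (fun k => E' k j) hpos1 with hFdef
      have hF : ∀ j s, (F j).f s = ∑ k, lam k * (E' k j).f s := by
        intro j s; simp only [hFdef, normMix, h1, div_one]
      refine ⟨F, ?_, ?_⟩
      · intro s
        rw [hΘ s]
        have hk' : ∀ k, lam k * (D k).f s = ∑ j, pr j * (lam k * (E' k j).f s) := by
          intro k
          rcases lt_or_eq_of_le (h0 k) with hk | hk
          · rw [hE'1 k hk s, Finset.mul_sum]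
            exact Finset.sum_congr rfl fun j _ => by ring
          · rw [← hk]; simp
        rw [Finset.sum_congr rfl fun k _ => hk' k, Finset.sum_comm]
        refine Finset.sum_congr rfl fun j _ => ?_
        rw [← Finset.mul_sum, hF j s]
      · exact fun j => ih j (hf j) ι lam h0 h1 (fun k => E' k j)
          (fun k hk => hE'2 k hk j) (F j) (hF j)
  | nsum m f ih =>
    intro hnd ι _ lam h0 h1 D hsat Θ hΘ
    classical
    cases hnd with
    | nsum _ _ hf =>
      obtain ⟨k0, hk0⟩ := exists_pos_of_sum_one h0 h1
      have hsat' : ∀ k, 0 < lam k → ∃ pk : Fin m → ℝ, (∀ j, 0 ≤ pk j) ∧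
          (∑ j, pk j) = 1 ∧ ∃ E : Fin m → ProbDist S,
          (∀ s, (D k).f s = ∑ j, pk j * (E j).f s) ∧ ∀ j, Sat G (f j) (E j) := hsat
      choose pk hpk0 hpk1 E hEeq hEsat using hsat'
      set p' : ι → Fin m → ℝ := fun k =>
        if h : 0 < lam k then pk k h else fun _ => 0 with hp'def
      set E' : ι → Fin m → ProbDist S := fun k =>
        if h : 0 < lam k then E k h else fun _ => D k with hE'def
      have hp'0 : ∀ k j, 0 ≤ p' k j := by
        intro k j
        simp only [hp'def]
        split
        · exact hpk0 k _ j
        · exact le_refl 0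
      have hcw : ∀ k j, 0 ≤ lam k * p' k j := fun k j =>
        mul_nonneg (h0 k) (hp'0 k j)
      set q : Fin m → ℝ := fun j => ∑ k, lam k * p' k j with hqdef
      have hq0 : ∀ j, 0 ≤ q j := fun j =>
        Finset.sum_nonneg fun k _ => hcw k j
      have hqsum : ∑ j, q j = 1 := by
        simp only [hqdef]
        rw [Finset.sum_comm, ← h1]
        refine Finset.sum_congr rfl fun k _ => ?_
        rcases lt_or_eq_of_le (h0 k) with hk | hk
        · rw [← Finset.mul_sum]
          simp only [hp'def, dif_pos hk]
          rw [hpk1 k hk, mul_one]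
        · rw [← hk]; simp
      have hdec : ∀ k, 0 < lam k → ∀ s,
          (D k).f s = ∑ j, p' k j * (E' k j).f s := by
        intro k hk s
        simp only [hp'def, hE'def, dif_pos hk]
        exact hEeq k hk s
      have hE'sat : ∀ k, 0 < lam k → ∀ j, Sat G (f j) (E' k j) := by
        intro k hk j
        simp only [hE'def, dif_pos hk]
        exact hEsat k hk j
      have hqd : ∀ j, q j = ∑ k, lam k * p' k j := fun j => rfl
      set F : Fin m → ProbDist S := fun j =>
        if h : 0 < q j then
          normMix (fun k => lam k * p' k j) (fun k => hcw k j)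
            (fun k => E' k j) (hqd j ▸ h)
        else E' k0 j with hFdef
      have hFf : ∀ j, 0 < q j →
          ∀ s, (F j).f s = (∑ k, (lam k * p' k j) * (E' k j).f s) / q j := by
        intro j hj s
        simp only [hFdef, dif_pos hj, normMix]
        rfl
      refine ⟨q, hq0, hqsum, F, ?_, ?_⟩
      · intro s
        rw [hΘ s]
        have hk' : ∀ k, lam k * (D k).f s
            = ∑ j, (lam k * p' k j) * (E' k j).f s := by
          intro k
          rcases lt_or_eq_of_le (h0 k) with hk | hk
          · rw [hdec k hk s, Finset.mul_sum]
            exact Finset.sum_congr rfl fun j _ => by ring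
          · rw [← hk]; simp
        rw [Finset.sum_congr rfl fun k _ => hk' k, Finset.sum_comm]
        refine Finset.sum_congr rfl fun j _ => ?_
        by_cases hj : 0 < q j
        · rw [hFf j hj s, mul_div_cancel₀ _ (ne_of_gt hj)]
        · have hqj : q j = 0 := le_antisymm (not_lt.1 hj) (hq0 j)
          have hz : ∀ k, lam k * p' k j = 0 := fun k =>
            (Finset.sum_eq_zero_iff_of_nonneg (fun k _ => hcw k j)).1
              ((hqd j).symm.trans hqj) k (Finset.mem_univ k)
          rw [hqj, zero_mul]
          exact Finset.sum_eq_zero fun k _ => by rw [hz k, zero_mul]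
      · intro j
        by_cases hj : 0 < q j
        · refine ih j (hf j) ι (fun k => lam k * p' k j / q j)
            (fun k => div_nonneg (hcw k j) (hq0 j)) ?_
            (fun k => E' k j) ?_ (F j) ?_
          · rw [← Finset.sum_div, ← hqd j, div_self (ne_of_gt hj)]
          · intro k hk
            have hlk : 0 < lam k := by
              by_contra hc
              have : lam k = 0 := le_antisymm (not_lt.1 hc) (h0 k)
              simp [this] at hk
            exact hE'sat k hlk j
          · intro s
            rw [hFf j hj s, Finset.sum_div]
            exact Finset.sum_congr rfl fun k _ => by ring
        · simp only [hFdef, dif_neg hj]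
          exact hE'sat k0 hk0 j

/-- **Lemma (characteristic formulas on distributions).** If, for all states,
`s ≼^L_n t` implies that the point distribution of `t` satisfies `φ^n_s`, then for all
distributions, `Δ (≼̄^L_n) Θ` implies that `Θ` satisfies `φ^n_Δ`. -/
theorem charDist_carries_over {S P A1 A2 : Type}
    [Fintype S] [DecidableEq S] [Fintype A1] [Fintype A2] [DecidableEq A2] [Fintype P]
    (G : PGS S P A1 A2) (n : ℕ)
    (h : ∀ s t : S, SimLn G n s t →
      Sat G (charState G n s) (ProbDist.point t)) :
    ∀ Δ Θ : ProbDist S, Lift (SimLn G n) Δ Θ →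
      Sat G (charDist (charState G n) Δ) Θ := by
  classical
  rintro Δ Θ ⟨w, hw0, hwrow, hwcol, hwR⟩
  set e : Fin Δ.support.card ≃ {x // x ∈ Δ.support} := Δ.support.equivFin.symm with he
  -- basic facts
  have hmem : ∀ j, ((e j : {x // x ∈ Δ.support}) : S) ∈ Δ.support := fun j => (e j).2
  have hpos : ∀ j, 0 < Δ.f ((e j : {x // x ∈ Δ.support}) : S) := by
    intro j
    have := hmem j
    simp only [ProbDist.support, Finset.mem_filter] at this
    exact this.2
  have hzero : ∀ t : S, t ∉ Δ.support → ∀ s, w t s = 0 := by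
    intro t ht s
    have hΔt : Δ.f t = 0 := by
      have h1 : ¬ 0 < Δ.f t := by simpa [ProbDist.support] using ht
      exact le_antisymm (not_lt.1 h1) (Δ.nonneg t)
    have hsum : ∑ s', w t s' = 0 := (hwrow t).trans hΔt
    have := (Finset.sum_eq_zero_iff_of_nonneg (fun s' _ => hw0 t s')).1 hsum
    exact this s (Finset.mem_univ s)
  -- the conditional distributions
  have hrowpos : ∀ j, 0 < ∑ t, w ((e j : {x // x ∈ Δ.support}) : S) t := by
    intro j; rw [hwrow]; exact hpos j
  set D : Fin Δ.support.card → ProbDist S := fun j =>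
    normMix (fun t => w ((e j : {x // x ∈ Δ.support}) : S) t)
      (fun t => hw0 _ t) (fun t => ProbDist.point t) (hrowpos j) with hD
  have hDf : ∀ j s, (D j).f s =
      w ((e j : {x // x ∈ Δ.support}) : S) s / Δ.f ((e j : {x // x ∈ Δ.support}) : S) := by
    intro j s
    simp only [hD, normMix, hwrow]
    congr 1
    simp [ProbDist.point, mul_ite, mul_one, mul_zero, Finset.sum_ite_eq]
  show Sat G (LFormula.psum _ _ _) Θ
  refine ⟨D, ?_, ?_⟩
  · intro s
    have hcol : Θ.f s = ∑ t ∈ Δ.support, w t s := by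
      rw [← hwcol s]
      exact (Finset.sum_subset (Finset.subset_univ _)
        (fun t _ ht => hzero t ht s)).symm
    rw [hcol, ← Finset.sum_coe_sort Δ.support (fun t => w t s),
      ← Equiv.sum_comp e (fun x => w ((x : {x // x ∈ Δ.support}) : S) s)]
    refine Finset.sum_congr rfl fun j _ => ?_
    rw [hDf j s, mul_div_cancel₀ _ (hpos j).ne']
  · intro j
    -- `D j` is a convex combination of point distributions of `SimLn`-successors
    refine sat_mix G _ (charState_noDisj G n _) S
      (fun t => w ((e j : {x // x ∈ Δ.support}) : S) t / Δ.f ((e j : {x // x ∈ Δ.support}) : S))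
      (fun t => div_nonneg (hw0 _ t) (hpos j).le) ?_ (fun t => ProbDist.point t) ?_ (D j) ?_
    · rw [← Finset.sum_div, hwrow, div_self (hpos j).ne']
    · intro t ht
      have hwpos : 0 < w ((e j : {x // x ∈ Δ.support}) : S) t := by
        by_contra hc
        have : w ((e j : {x // x ∈ Δ.support}) : S) t = 0 :=
          le_antisymm (not_lt.1 hc) (hw0 _ t)
        simp [this] at ht
      exact h _ _ (hwR _ _ hwpos)
    · intro s
      rw [hDf j s]
      simp [ProbDist.point, mul_ite, mul_one, mul_zero, Finset.sum_ite_eq]
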